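/- The one-parameter deformation G : ℝ³ × ℝ → ℝ⁴ given by G(x,y,z,λ) = (x² + λyz, y² + λzx, z² + λxy, xyz) is bi-Lipschitz 𝒞-trivial as a germ at the origin. -/

import Mathlib

/-- `K` is bi-Lipschitz on the set `U`. -/
def BiLipOn {α β : Type*} [PseudoMetricSpace α] [PseudoMetricSpace β]
    (K : α → β) (U : Set α) : Prop :=
  ∃ C > (0 : ℝ), ∀ a ∈ U, ∀ b ∈ U,
    dist a b / C ≤ dist (K a) (K b) ∧ dist (K a) (K b) ≤ C * dist a b

/-- A one-parameter deformation `Fam : E × ℝ → F` of `f = Fam (·, 0)` is bi-Lipschitz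
𝒞-trivial as a germ at the origin: there are a neighbourhood `U` of `0` in
`ℝ × E × F` and `θ : ℝ × E × F → F` such that `K(λ,x,y) = (λ, x, θ(λ,x,y))` is
bi-Lipschitz on `U`, preserves the zero section, and carries the graph of
`Fam (·, λ)` to the graph of `Fam (·, 0)`. -/
def BiLipCTrivial {E F : Type*} [NormedAddCommGroup E] [NormedAddCommGroup F]
    (Fam : E × ℝ → F) : Prop :=
  ∃ (U : Set (ℝ × E × F)) (θ : ℝ × E × F → F),
    U ∈ nhds 0 ∧
    BiLipOn (fun q : ℝ × E × F => (q.1, q.2.1, θ q)) U ∧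
    (∀ (l : ℝ) (x : E), (l, x, (0 : F)) ∈ U → θ (l, x, 0) = 0) ∧
    (∀ (l : ℝ) (x : E), (l, x, Fam (x, l)) ∈ U → θ (l, x, Fam (x, l)) = Fam (x, 0))

namespace Stmt12Aux
noncomputable section

/-! ### The unperturbed map, the perturbation direction, and the trivialization -/

def fG (x : Fin 3 → ℝ) : Fin 4 → ℝ := ![x 0 ^ 2, x 1 ^ 2, x 2 ^ 2, x 0 * x 1 * x 2]
def vG (x : Fin 3 → ℝ) : Fin 4 → ℝ := ![x 1 * x 2, x 2 * x 0, x 0 * x 1, 0]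
def phiG (x : Fin 3 → ℝ) (y : Fin 4 → ℝ) : ℝ := min 1 (2 * ‖y‖ / ‖fG x‖)
def wG (x : Fin 3 → ℝ) (y : Fin 4 → ℝ) : Fin 4 → ℝ := phiG x y • vG x
def thetaG (q : ℝ × (Fin 3 → ℝ) × (Fin 4 → ℝ)) : Fin 4 → ℝ :=
  q.2.2 - q.1 • wG q.2.1 q.2.2

/-! ### Elementary scalar lemmas -/

lemma min_div_claim (A B c t : ℝ) (hA : 0 ≤ A) (hc : 0 ≤ c) (hcB : c ≤ B) (ht : 0 ≤ t) :
    c * |min 1 (t / A) - min 1 (t / B)| ≤ |A - B| := by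
  have hB : 0 ≤ B := hc.trans hcB
  rcases eq_or_lt_of_le hA with hA0 | hA0
  · rw [← hA0, div_zero, min_eq_right zero_le_one, zero_sub, abs_neg,
      abs_of_nonneg (le_min zero_le_one (div_nonneg ht hB))]
    calc c * min 1 (t / B) ≤ B * 1 := by
          apply mul_le_mul hcB (min_le_left _ _) (le_min zero_le_one (div_nonneg ht hB)) hB
      _ = |0 - B| := by rw [abs_sub_comm]; simp [abs_of_nonneg hB]
  rcases eq_or_lt_of_le hB with hB0 | hB0
  · have : c = 0 := le_antisymm (by rw [← hB0] at hcB; exact hcB) hc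
    simp [this, abs_nonneg]
  rcases le_or_gt A t with h1 | h1 <;> rcases le_or_gt B t with h2 | h2
  · rw [min_eq_left (by rw [le_div_iff₀ hA0]; linarith),
      min_eq_left (by rw [le_div_iff₀ hB0]; linarith)]
    simp [abs_nonneg]
  · rw [min_eq_left (by rw [le_div_iff₀ hA0]; linarith),
      min_eq_right (by rw [div_le_one hB0]; linarith)]
    have h3 : |1 - t / B| = (B - t) / B := by
      rw [abs_of_nonneg (by rw [sub_nonneg, div_le_one hB0]; linarith)]
      field_simp
    rw [h3, abs_sub_comm, abs_of_nonneg (by linarith)]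
    calc c * ((B - t) / B) ≤ B * ((B - t) / B) :=
          mul_le_mul_of_nonneg_right hcB (div_nonneg (by linarith) hB0.le)
      _ = B - t := by field_simp
      _ ≤ B - A := by linarith
  · rw [min_eq_right (by rw [div_le_one hA0]; linarith),
      min_eq_left (by rw [le_div_iff₀ hB0]; linarith)]
    have h3 : |t / A - 1| = (A - t) / A := by
      rw [abs_of_nonpos (by rw [sub_nonpos, div_le_one hA0]; linarith)]
      field_simp; ring
    rw [h3, abs_of_nonneg (by linarith)]
    calc c * ((A - t) / A) ≤ B * ((A - t) / A) :=
          mul_le_mul_of_nonneg_right hcB (div_nonneg (by linarith) hA0.le)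
      _ ≤ A - B := by
          rw [← mul_div_assoc, div_le_iff₀ hA0]
          nlinarith [sq_nonneg (A - B)]
  · rw [min_eq_right (by rw [div_le_one hA0]; linarith),
      min_eq_right (by rw [div_le_one hB0]; linarith)]
    have h3 : t / A - t / B = t * (B - A) / (A * B) := by field_simp
    rw [h3, abs_div, abs_mul, abs_of_nonneg ht, abs_of_nonneg (by positivity : (0:ℝ) ≤ A * B),
      abs_sub_comm B A,
      show c * (t * |A - B| / (A * B)) = c * t * |A - B| / (A * B) by ring,
      div_le_iff₀ (by positivity : (0:ℝ) < A * B)]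
    have h4 : 0 ≤ |A - B| := abs_nonneg _
    have hct : c * t ≤ A * B := by nlinarith
    have := mul_le_mul_of_nonneg_right hct h4
    linarith

lemma min_div_y (A s t : ℝ) (hA : 0 ≤ A) : A * |min 1 (s / A) - min 1 (t / A)| ≤ |s - t| := by
  rcases eq_or_lt_of_le hA with hA0 | hA0
  · simp [← hA0, abs_nonneg]
  have h := abs_min_sub_min_le_max 1 (s / A) 1 (t / A)
  simp only [sub_self, abs_zero] at h
  rw [max_eq_right (abs_nonneg _)] at h
  calc A * |min 1 (s / A) - min 1 (t / A)| ≤ A * |s / A - t / A| :=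
        mul_le_mul_of_nonneg_left h hA
    _ = |s - t| := by
        rw [div_sub_div_same, abs_div, abs_of_pos hA0]
        field_simp

lemma mul2_lip (a b a' b' d : ℝ) (ha : |a| ≤ 1/10) (hb' : |b'| ≤ 1/10)
    (h1 : |a - a'| ≤ d) (h2 : |b - b'| ≤ d) : |a * b - a' * b'| ≤ d := by
  have hd : 0 ≤ d := (abs_nonneg _).trans h1
  have key : a * b - a' * b' = a * (b - b') + (a - a') * b' := by ring
  rw [key]
  calc |a * (b - b') + (a - a') * b'| ≤ |a| * |b - b'| + |a - a'| * |b'| := by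
        refine (abs_add_le _ _).trans ?_; rw [abs_mul, abs_mul]
  _ ≤ (1/10) * d + d * (1/10) := by gcongr
  _ ≤ d := by linarith

lemma mul3_lip (a b c a' b' c' d : ℝ) (ha : |a| ≤ 1/10) (hb : |b| ≤ 1/10)
    (hb' : |b'| ≤ 1/10) (hc' : |c'| ≤ 1/10)
    (h1 : |a - a'| ≤ d) (h2 : |b - b'| ≤ d) (h3 : |c - c'| ≤ d) :
    |a * b * c - a' * b' * c'| ≤ d := by
  have hd : 0 ≤ d := (abs_nonneg _).trans h1
  have key : a * b * c - a' * b' * c' =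
      a * b * (c - c') + a * (b - b') * c' + (a - a') * b' * c' := by ring
  rw [key]
  calc _ ≤ |a * b * (c - c')| + |a * (b - b') * c'| + |(a - a') * b' * c'| := abs_add_three _ _ _
  _ = |a| * |b| * |c - c'| + |a| * |b - b'| * |c'| + |a - a'| * (|b'| * |c'|) := by
        rw [abs_mul, abs_mul, abs_mul, abs_mul, abs_mul, abs_mul]; ring
  _ ≤ (1/10) * (1/10) * d + (1/10) * d * (1/10) + d * ((1/10) * (1/10)) := by gcongr
  _ ≤ d := by linarith

/-! ### Component / norm estimates -/

lemma abs_comp3_le_norm (x : Fin 3 → ℝ) (i : Fin 3) : |x i| ≤ ‖x‖ := by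
  simpa using norm_le_pi_norm x i

lemma abs_comp_le_norm (f : Fin 4 → ℝ) (i : Fin 4) : |f i| ≤ ‖f‖ := by
  simpa using norm_le_pi_norm f i

lemma norm4_le (f : Fin 4 → ℝ) (r : ℝ) (hr : 0 ≤ r) (h : ∀ i, |f i| ≤ r) : ‖f‖ ≤ r := by
  rw [pi_norm_le_iff_of_nonneg hr]; simpa using h

lemma sq_le_norm_fG (x : Fin 3 → ℝ) (i : Fin 3) : x i ^ 2 ≤ ‖fG x‖ := by
  fin_cases i
  · simpa [fG, abs_of_nonneg (sq_nonneg (x 0))] using abs_comp_le_norm (fG x) 0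
  · simpa [fG, abs_of_nonneg (sq_nonneg (x 1))] using abs_comp_le_norm (fG x) 1
  · simpa [fG, abs_of_nonneg (sq_nonneg (x 2))] using abs_comp_le_norm (fG x) 2

lemma abs_mul_le_norm_fG (x : Fin 3 → ℝ) (i j : Fin 3) : |x i * x j| ≤ ‖fG x‖ := by
  have hi := sq_le_norm_fG x i
  have hj := sq_le_norm_fG x j
  rw [abs_le]
  exact ⟨by nlinarith [sq_nonneg (x i + x j)], by nlinarith [sq_nonneg (x i - x j)]⟩

lemma norm_fG_nonneg (x : Fin 3 → ℝ) : 0 ≤ ‖fG x‖ := norm_nonneg _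

lemma norm_vG_le_fG (x : Fin 3 → ℝ) : ‖vG x‖ ≤ ‖fG x‖ := by
  refine norm4_le _ _ (norm_fG_nonneg x) fun i => ?_
  fin_cases i
  · simpa [vG] using abs_mul_le_norm_fG x 1 2
  · simpa [vG] using abs_mul_le_norm_fG x 2 0
  · simpa [vG] using abs_mul_le_norm_fG x 0 1
  · simpa [vG] using norm_fG_nonneg x

lemma norm_vG_le_sq (x : Fin 3 → ℝ) : ‖vG x‖ ≤ ‖x‖ ^ 2 := by
  refine norm4_le _ _ (by positivity) fun i => ?_
  have h0 := abs_comp3_le_norm x 0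
  have h1 := abs_comp3_le_norm x 1
  have h2 := abs_comp3_le_norm x 2
  fin_cases i <;> simp [vG, abs_mul] <;>
    nlinarith [abs_nonneg (x 0), abs_nonneg (x 1), abs_nonneg (x 2), norm_nonneg x]

lemma x_eq_zero_of_fG (x : Fin 3 → ℝ) (h : fG x = 0) : x = 0 := by
  funext i
  have hh := sq_le_norm_fG x i
  rw [h] at hh
  simp only [norm_zero] at hh
  have := le_antisymm hh (sq_nonneg _)
  simpa using pow_eq_zero_iff (n := 2) (by norm_num) |>.mp this

lemma vG_zero : vG 0 = 0 := by
  funext i; fin_cases i <;> simp [vG]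

/-! ### Lipschitz estimates -/

lemma vG_sub (x x' : Fin 3 → ℝ) (hx : ‖x‖ ≤ 1/10) (hx' : ‖x'‖ ≤ 1/10) :
    ‖vG x - vG x'‖ ≤ ‖x - x'‖ := by
  have hb : ∀ i, |x i| ≤ 1/10 := fun i => (abs_comp3_le_norm x i).trans hx
  have hb' : ∀ i, |x' i| ≤ 1/10 := fun i => (abs_comp3_le_norm x' i).trans hx'
  have hd : ∀ i, |x i - x' i| ≤ ‖x - x'‖ := fun i => by
    simpa using abs_comp3_le_norm (x - x') i
  refine norm4_le _ _ (norm_nonneg _) fun i => ?_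
  fin_cases i <;>
    simp only [vG, Pi.sub_apply, Matrix.cons_val_zero, Matrix.cons_val_one, Matrix.head_cons,
      Matrix.cons_val_two, Matrix.tail_cons, Matrix.cons_val_three, Matrix.cons_val_fin_one]
  · exact mul2_lip _ _ _ _ _ (hb 1) (hb' 2) (hd 1) (hd 2)
  · exact mul2_lip _ _ _ _ _ (hb 2) (hb' 0) (hd 2) (hd 0)
  · exact mul2_lip _ _ _ _ _ (hb 0) (hb' 1) (hd 0) (hd 1)
  · simpa using norm_nonneg (x - x')

lemma fG_sub (x x' : Fin 3 → ℝ) (hx : ‖x‖ ≤ 1/10) (hx' : ‖x'‖ ≤ 1/10) :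
    ‖fG x - fG x'‖ ≤ ‖x - x'‖ := by
  have hb : ∀ i, |x i| ≤ 1/10 := fun i => (abs_comp3_le_norm x i).trans hx
  have hb' : ∀ i, |x' i| ≤ 1/10 := fun i => (abs_comp3_le_norm x' i).trans hx'
  have hd : ∀ i, |x i - x' i| ≤ ‖x - x'‖ := fun i => by
    simpa using abs_comp3_le_norm (x - x') i
  refine norm4_le _ _ (norm_nonneg _) fun i => ?_
  fin_cases i <;>
    simp only [fG, Pi.sub_apply, Matrix.cons_val_zero, Matrix.cons_val_one, Matrix.head_cons,
      Matrix.cons_val_two, Matrix.tail_cons, Matrix.cons_val_three, Matrix.cons_val_fin_one,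
      sq]
  · exact mul2_lip _ _ _ _ _ (hb 0) (hb' 0) (hd 0) (hd 0)
  · exact mul2_lip _ _ _ _ _ (hb 1) (hb' 1) (hd 1) (hd 1)
  · exact mul2_lip _ _ _ _ _ (hb 2) (hb' 2) (hd 2) (hd 2)
  · exact mul3_lip _ _ _ _ _ _ _ (hb 0) (hb 1) (hb' 1) (hb' 2) (hd 0) (hd 1) (hd 2)

lemma phiG_nonneg (x : Fin 3 → ℝ) (y : Fin 4 → ℝ) : 0 ≤ phiG x y :=
  le_min zero_le_one (div_nonneg (by positivity) (norm_nonneg _))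

lemma phiG_le_one (x : Fin 3 → ℝ) (y : Fin 4 → ℝ) : phiG x y ≤ 1 := min_le_left _ _

lemma wG_sub (x x' : Fin 3 → ℝ) (y y' : Fin 4 → ℝ) (hx : ‖x‖ ≤ 1/10) (hx' : ‖x'‖ ≤ 1/10) :
    ‖wG x y - wG x' y'‖ ≤ 2 * ‖x - x'‖ + 2 * ‖y - y'‖ := by
  have key : wG x y - wG x' y' =
      (phiG x y • (vG x - vG x') + (phiG x y - phiG x' y) • vG x')
        + (phiG x' y - phiG x' y') • vG x' := by
    simp only [wG, smul_sub, sub_smul]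
    abel
  have t1 : ‖phiG x y • (vG x - vG x')‖ ≤ ‖x - x'‖ := by
    rw [norm_smul, Real.norm_eq_abs, abs_of_nonneg (phiG_nonneg x y)]
    calc phiG x y * ‖vG x - vG x'‖ ≤ 1 * ‖vG x - vG x'‖ :=
          mul_le_mul_of_nonneg_right (phiG_le_one x y) (norm_nonneg _)
      _ = ‖vG x - vG x'‖ := one_mul _
      _ ≤ ‖x - x'‖ := vG_sub x x' hx hx'
  have t2 : ‖(phiG x y - phiG x' y) • vG x'‖ ≤ ‖x - x'‖ := by
    rw [norm_smul, Real.norm_eq_abs, mul_comm]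
    calc ‖vG x'‖ * |phiG x y - phiG x' y| ≤ |‖fG x‖ - ‖fG x'‖| :=
          min_div_claim ‖fG x‖ ‖fG x'‖ ‖vG x'‖ (2 * ‖y‖) (norm_nonneg _) (norm_nonneg _)
            (norm_vG_le_fG x') (by positivity)
      _ ≤ ‖fG x - fG x'‖ := abs_norm_sub_norm_le _ _
      _ ≤ ‖x - x'‖ := fG_sub x x' hx hx'
  have t3 : ‖(phiG x' y - phiG x' y') • vG x'‖ ≤ 2 * ‖y - y'‖ := by
    rw [norm_smul, Real.norm_eq_abs, mul_comm]
    calc ‖vG x'‖ * |phiG x' y - phiG x' y'|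
        ≤ ‖fG x'‖ * |phiG x' y - phiG x' y'| :=
          mul_le_mul_of_nonneg_right (norm_vG_le_fG x') (abs_nonneg _)
      _ ≤ |2 * ‖y‖ - 2 * ‖y'‖| := min_div_y ‖fG x'‖ (2 * ‖y‖) (2 * ‖y'‖) (norm_nonneg _)
      _ = 2 * |‖y‖ - ‖y'‖| := by
          rw [show 2 * ‖y‖ - 2 * ‖y'‖ = 2 * (‖y‖ - ‖y'‖) by ring, abs_mul,
            abs_of_nonneg (by norm_num : (0:ℝ) ≤ 2)]
      _ ≤ 2 * ‖y - y'‖ := by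
          have := abs_norm_sub_norm_le y y'
          linarith
  calc ‖wG x y - wG x' y'‖
      ≤ ‖phiG x y • (vG x - vG x') + (phiG x y - phiG x' y) • vG x'‖
        + ‖(phiG x' y - phiG x' y') • vG x'‖ := by rw [key]; exact norm_add_le _ _
    _ ≤ (‖x - x'‖ + ‖x - x'‖) + 2 * ‖y - y'‖ := by
        gcongr
        exact (norm_add_le _ _).trans (add_le_add t1 t2)
    _ = 2 * ‖x - x'‖ + 2 * ‖y - y'‖ := by ring

lemma norm_wG_le (x : Fin 3 → ℝ) (y : Fin 4 → ℝ) : ‖wG x y‖ ≤ ‖x‖ ^ 2 := by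
  rw [wG, norm_smul, Real.norm_eq_abs, abs_of_nonneg (phiG_nonneg x y)]
  calc phiG x y * ‖vG x‖ ≤ 1 * ‖vG x‖ :=
        mul_le_mul_of_nonneg_right (phiG_le_one x y) (norm_nonneg _)
    _ = ‖vG x‖ := one_mul _
    _ ≤ ‖x‖ ^ 2 := norm_vG_le_sq x


lemma ball_bounds (q : ℝ × (Fin 3 → ℝ) × (Fin 4 → ℝ))
    (hq : q ∈ Metric.ball (0 : ℝ × (Fin 3 → ℝ) × (Fin 4 → ℝ)) (1/10)) :
    |q.1| ≤ 1/10 ∧ ‖q.2.1‖ ≤ 1/10 ∧ ‖q.2.2‖ ≤ 1/10 := by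
  rw [Metric.mem_ball, Prod.dist_eq, Prod.dist_eq] at hq
  simp only [Prod.fst_zero, Prod.snd_zero, Real.dist_eq, sub_zero, dist_zero_right,
    max_lt_iff] at hq
  exact ⟨hq.1.le, hq.2.1.le, hq.2.2.le⟩

lemma Fam_eq (x : Fin 3 → ℝ) (l : ℝ) :
    (![x 0 ^ 2 + l * x 1 * x 2, x 1 ^ 2 + l * x 2 * x 0,
       x 2 ^ 2 + l * x 0 * x 1, x 0 * x 1 * x 2] : Fin 4 → ℝ) = fG x + l • vG x := by
  funext i
  fin_cases i <;> simp [fG, vG] <;> ring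

end
end Stmt12Aux

open Stmt12Aux in
/-- the deformation `G(x,y,z,λ) = (x² + λyz, y² + λzx, z² + λxy, xyz)`
is bi-Lipschitz 𝒞-trivial as a germ at the origin. -/
theorem stmt12 :
    BiLipCTrivial (fun q : (Fin 3 → ℝ) × ℝ =>
      (![q.1 0 ^ 2 + q.2 * q.1 1 * q.1 2,
         q.1 1 ^ 2 + q.2 * q.1 2 * q.1 0,
         q.1 2 ^ 2 + q.2 * q.1 0 * q.1 1,
         q.1 0 * q.1 1 * q.1 2] : Fin 4 → ℝ)) := by
  refine ⟨Metric.ball 0 (1/10), thetaG, Metric.ball_mem_nhds _ (by norm_num), ?_, ?_, ?_⟩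
  · -- bi-Lipschitz
    refine ⟨2, by norm_num, fun a ha b hb => ?_⟩
    obtain ⟨hal, hax, hay⟩ := ball_bounds a ha
    obtain ⟨hbl, hbx, hby⟩ := ball_bounds b hb
    have hd0 : 0 ≤ dist a b := dist_nonneg
    have hd1 : |a.1 - b.1| ≤ dist a b := by
      rw [← Real.dist_eq, Prod.dist_eq]; exact le_max_left _ _
    have hd2 : ‖a.2.1 - b.2.1‖ ≤ dist a b := by
      rw [← dist_eq_norm, Prod.dist_eq, Prod.dist_eq]
      exact le_trans (le_max_left _ _) (le_max_right _ _)
    have hd3 : ‖a.2.2 - b.2.2‖ ≤ dist a b := by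
      rw [← dist_eq_norm, Prod.dist_eq, Prod.dist_eq]
      exact le_trans (le_max_right _ _) (le_max_right _ _)
    have hwb : ‖wG b.2.1 b.2.2‖ ≤ 1/100 := by
      refine (norm_wG_le _ _).trans ?_
      nlinarith [norm_nonneg b.2.1]
    have hwsub : ‖wG a.2.1 a.2.2 - wG b.2.1 b.2.2‖ ≤
        2 * ‖a.2.1 - b.2.1‖ + 2 * ‖a.2.2 - b.2.2‖ := wG_sub _ _ _ _ hax hbx
    have hW : ‖a.1 • wG a.2.1 a.2.2 - b.1 • wG b.2.1 b.2.2‖ ≤ dist a b / 2 := by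
      have e : a.1 • wG a.2.1 a.2.2 - b.1 • wG b.2.1 b.2.2 =
          a.1 • (wG a.2.1 a.2.2 - wG b.2.1 b.2.2) + (a.1 - b.1) • wG b.2.1 b.2.2 := by
        rw [smul_sub, sub_smul]; abel
      calc ‖a.1 • wG a.2.1 a.2.2 - b.1 • wG b.2.1 b.2.2‖
          ≤ |a.1| * ‖wG a.2.1 a.2.2 - wG b.2.1 b.2.2‖ + |a.1 - b.1| * ‖wG b.2.1 b.2.2‖ := by
            rw [e]
            refine (norm_add_le _ _).trans ?_
            rw [norm_smul, norm_smul, Real.norm_eq_abs, Real.norm_eq_abs]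
        _ ≤ (1/10) * (2 * ‖a.2.1 - b.2.1‖ + 2 * ‖a.2.2 - b.2.2‖) + dist a b * (1/100) := by
            gcongr
        _ ≤ dist a b / 2 := by linarith
    have hθ : thetaG a - thetaG b =
        (a.2.2 - b.2.2) - (a.1 • wG a.2.1 a.2.2 - b.1 • wG b.2.1 b.2.2) := by
      simp only [thetaG]; abel
    have hup : ‖thetaG a - thetaG b‖ ≤ ‖a.2.2 - b.2.2‖ + dist a b / 2 := by
      rw [hθ]
      exact (norm_sub_le _ _).trans (by linarith)
    have hlow : ‖a.2.2 - b.2.2‖ ≤ ‖thetaG a - thetaG b‖ + dist a b / 2 := by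
      have e2 : a.2.2 - b.2.2 =
          (thetaG a - thetaG b) + (a.1 • wG a.2.1 a.2.2 - b.1 • wG b.2.1 b.2.2) := by
        rw [hθ]; abel
      calc ‖a.2.2 - b.2.2‖ ≤ ‖thetaG a - thetaG b‖ +
            ‖a.1 • wG a.2.1 a.2.2 - b.1 • wG b.2.1 b.2.2‖ := by
            rw [e2]; exact norm_add_le _ _
        _ ≤ ‖thetaG a - thetaG b‖ + dist a b / 2 := by linarith
    have hK : dist ((fun q : ℝ × (Fin 3 → ℝ) × (Fin 4 → ℝ) => (q.1, q.2.1, thetaG q)) a)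
        ((fun q : ℝ × (Fin 3 → ℝ) × (Fin 4 → ℝ) => (q.1, q.2.1, thetaG q)) b) =
        max |a.1 - b.1| (max ‖a.2.1 - b.2.1‖ ‖thetaG a - thetaG b‖) := by
      rw [Prod.dist_eq, Prod.dist_eq, Real.dist_eq, dist_eq_norm, dist_eq_norm]
    set M := max |a.1 - b.1| (max ‖a.2.1 - b.2.1‖ ‖thetaG a - thetaG b‖) with hM
    have hM1 : |a.1 - b.1| ≤ M := le_max_left _ _
    have hM2 : ‖a.2.1 - b.2.1‖ ≤ M := le_trans (le_max_left _ _) (le_max_right _ _)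
    have hM3 : ‖thetaG a - thetaG b‖ ≤ M := le_trans (le_max_right _ _) (le_max_right _ _)
    constructor
    · rw [hK]
      have hdist : dist a b ≤ M + dist a b / 2 := by
        conv_lhs => rw [Prod.dist_eq, Prod.dist_eq]
        rw [Real.dist_eq, dist_eq_norm, dist_eq_norm]
        refine max_le (by linarith) (max_le (by linarith) ?_)
        calc ‖a.2.2 - b.2.2‖ ≤ ‖thetaG a - thetaG b‖ + dist a b / 2 := hlow
          _ ≤ M + dist a b / 2 := by linarith
      linarith
    · rw [hK]
      refine max_le (by linarith) (max_le (by linarith) ?_)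
      calc ‖thetaG a - thetaG b‖ ≤ ‖a.2.2 - b.2.2‖ + dist a b / 2 := hup
        _ ≤ 2 * dist a b := by linarith
  · -- zero section
    intro l x _
    have hphi : phiG x 0 = 0 := by simp [phiG]
    simp [thetaG, wG, hphi]
  · -- graph condition
    intro l x hU
    simp only [Fam_eq] at hU ⊢
    rw [show (0:ℝ) • vG x = 0 by simp, add_zero]
    by_cases hf : fG x = 0
    · have hx0 : x = 0 := x_eq_zero_of_fG x hf
      subst hx0
      simp [thetaG, wG, hf, vG_zero]
    · have hA : 0 < ‖fG x‖ := norm_pos_iff.mpr hf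
      obtain ⟨hl, -, -⟩ := ball_bounds _ hU
      simp only at hl
      have hv : ‖vG x‖ ≤ ‖fG x‖ := norm_vG_le_fG x
      have hlv : ‖l • vG x‖ ≤ (1/10) * ‖fG x‖ := by
        rw [norm_smul, Real.norm_eq_abs]
        exact mul_le_mul hl hv (norm_nonneg _) (by norm_num)
      have hF : ‖fG x‖ ≤ 2 * ‖fG x + l • vG x‖ := by
        have h := norm_add_le (fG x + l • vG x) (-(l • vG x))
        simp only [add_neg_cancel_right, norm_neg] at h
        linarith
      have hphi : phiG x (fG x + l • vG x) = 1 := by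
        rw [phiG, min_eq_left]
        rw [le_div_iff₀ hA]
        linarith
      simp only [thetaG, wG, hphi, one_smul]
      exact add_sub_cancel_right _ _
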